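/- arXiv:2407.16096 — 4 statements merged into one kernel-verified Lean document; each statement's English description precedes it below -/
import Mathlib

section
/- A twice-differentiable curve q : ℝ → ℝ^N satisfies the equations of motion M q̈(t) + α C q̇(t) + K q(t) + k_n max(wᵀq(t) − δ, 0) w = f cos(Ω t) for all t if and only if the transformed curve q̃ := V q − δ e₁ satisfies the transformed equations of motion M̃ q̃̈(t) + α C̃ q̃̇(t) + K̃ q̃(t) + k_n max(e₁ᵀ q̃(t), 0) e₁ = f̃ δ + f̃_t cos(Ω t) for all t. -/
open Matrix

noncomputable section

/-- The coordinate-transformation matrix `V = [[w₁, w̄ᵀ],[0, I]]`. -/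
def transMatrix {N : ℕ} (w : Fin (N + 1) → ℝ) : Matrix (Fin (N + 1)) (Fin (N + 1)) ℝ :=
  Matrix.of fun i j => if i = 0 then w j else if i = j then 1 else 0

/-- The first standard basis vector `e₁` of `ℝ^N`. -/
def e₁ {N : ℕ} : Fin (N + 1) → ℝ := Pi.single 0 1

/-- Congruence transformation `V⁻ᵀ M V⁻¹` of a matrix `M` by `V = transMatrix w`. -/
def congrT {N : ℕ} (w : Fin (N + 1) → ℝ) (M : Matrix (Fin (N + 1)) (Fin (N + 1)) ℝ) :
    Matrix (Fin (N + 1)) (Fin (N + 1)) ℝ :=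
  ((transMatrix w)⁻¹)ᵀ * M * (transMatrix w)⁻¹

/-- The constant transformed force `f̃ = −V⁻ᵀ K V⁻¹ e₁`. -/
def ftilde {N : ℕ} (w : Fin (N + 1) → ℝ) (K : Matrix (Fin (N + 1)) (Fin (N + 1)) ℝ) :
    Fin (N + 1) → ℝ :=
  -((congrT w K).mulVec e₁)

/-- The transformed external forcing vector `f̃_t = V⁻ᵀ f`. -/
def fttilde {N : ℕ} (w : Fin (N + 1) → ℝ) (f : Fin (N + 1) → ℝ) : Fin (N + 1) → ℝ :=
  (((transMatrix w)⁻¹)ᵀ).mulVec f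


/-- Explicit inverse of `transMatrix w`. -/
def Vi {N : ℕ} (w : Fin (N + 1) → ℝ) : Matrix (Fin (N + 1)) (Fin (N + 1)) ℝ :=
  Matrix.of fun i j => if i = 0 then (if j = 0 then (w 0)⁻¹ else -(w j) / w 0)
    else if i = j then 1 else 0

theorem hmulVi {N : ℕ} (w : Fin (N + 1) → ℝ) (hw : w 0 ≠ 0) :
    transMatrix w * Vi w = 1 := by
  ext i j
  rw [Matrix.mul_apply, Matrix.one_apply]
  by_cases hi : i = 0
  · subst hi
    have hV : ∀ k, transMatrix w 0 k = w k := fun k => rfl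
    simp only [hV]
    rw [Fin.sum_univ_succ]
    by_cases hj : j = 0
    · subst hj
      have h0 : (Vi w) 0 0 = (w 0)⁻¹ := by simp [Vi]
      have hk : ∀ k : Fin N, (Vi w) k.succ 0 = 0 := by
        intro k; simp [Vi, Fin.succ_ne_zero]
      simp [h0, hk, mul_inv_cancel₀ hw]
    · have hs : ∑ k : Fin N, w k.succ * (Vi w) k.succ j = w j := by
        obtain ⟨m, hm⟩ := Fin.exists_succ_eq.mpr hj
        subst hm
        rw [Finset.sum_eq_single m] <;>
          simp +contextual [Vi, Fin.succ_inj, Fin.succ_ne_zero]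
      have h0 : (Vi w) 0 j = -(w j) / w 0 := by simp [Vi, hj]
      rw [hs, h0, if_neg (Ne.symm hj)]
      field_simp; ring
  · have hV : ∀ k, transMatrix w i k = if i = k then 1 else 0 := by
      intro k; simp [transMatrix, hi]
    simp only [hV]
    rw [Finset.sum_eq_single i] <;> simp +contextual [Vi, hi, eq_comm]

/-- A twice-differentiable curve `q` satisfies the equations of motion
`M q̈ + α C q̇ + K q + k_n max(wᵀq − δ, 0) w = f cos(Ω t)` if and only if the transformed curve
`q̃ := V q − δ e₁` satisfies the transformed equations of motion
`M̃ q̃̈ + α C̃ q̃̇ + K̃ q̃ + k_n max(e₁ᵀ q̃, 0) e₁ = f̃ δ + f̃_t cos(Ω t)`. -/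
theorem eom_iff_transformed_eom {N : ℕ} (w : Fin (N + 1) → ℝ) (hw : w 0 ≠ 0)
    (M C K : Matrix (Fin (N + 1)) (Fin (N + 1)) ℝ) (f : Fin (N + 1) → ℝ)
    (α kn δ Ω : ℝ) (q q' q'' : ℝ → Fin (N + 1) → ℝ)
    (hq' : ∀ t, HasDerivAt q (q' t) t) (hq'' : ∀ t, HasDerivAt q' (q'' t) t) :
    (∀ t : ℝ, M.mulVec (q'' t) + α • C.mulVec (q' t) + K.mulVec (q t)
        + (kn * max (w ⬝ᵥ q t - δ) 0) • w = Real.cos (Ω * t) • f)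
    ↔ (∀ t : ℝ,
        (congrT w M).mulVec ((transMatrix w).mulVec (q'' t))
        + α • (congrT w C).mulVec ((transMatrix w).mulVec (q' t))
        + (congrT w K).mulVec ((transMatrix w).mulVec (q t) - δ • e₁)
        + (kn * max (((transMatrix w).mulVec (q t) - δ • e₁ : Fin (N + 1) → ℝ) 0) 0) • e₁
        = δ • ftilde w K + Real.cos (Ω * t) • fttilde w f) := by
  set V := transMatrix w with hVdef
  have hVVi : V * Vi w = 1 := hmulVi w hw
  have hViV : Vi w * V = 1 := mul_eq_one_comm.mp hVVi
  have hVinv : V⁻¹ = Vi w := Matrix.inv_eq_right_inv hVVi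
  have hVV : V⁻¹ * V = 1 := by rw [hVinv]; exact hViV
  have hVV' : V * V⁻¹ = 1 := by rw [hVinv]; exact hVVi
  set W : Matrix (Fin (N + 1)) (Fin (N + 1)) ℝ := (V⁻¹)ᵀ with hWdef
  have hWinj : Function.Injective W.mulVec := by
    intro x y hxy
    have h2 := congrArg (Vᵀ.mulVec) hxy
    simpa [hWdef, Matrix.mulVec_mulVec, ← Matrix.transpose_mul, hVV] using h2
  have h1 : ∀ (B : Matrix (Fin (N + 1)) (Fin (N + 1)) ℝ) (x : Fin (N + 1) → ℝ),
      (congrT w B).mulVec (V.mulVec x) = W.mulVec (B.mulVec x) := by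
    intro B x
    rw [congrT, Matrix.mulVec_mulVec, mul_assoc ((V⁻¹)ᵀ * B), hVV, mul_one,
      ← Matrix.mulVec_mulVec]
  have hwe : W.mulVec w = e₁ := by
    have hw' : Vᵀ.mulVec e₁ = w := by
      ext j
      simp [Matrix.mulVec, dotProduct, e₁, Pi.single_apply, hVdef, transMatrix]
    rw [← hw', Matrix.mulVec_mulVec, ← Matrix.transpose_mul, hVV', Matrix.transpose_one,
      Matrix.one_mulVec]
  have hmax : ∀ t, ((V.mulVec (q t) - δ • e₁ : Fin (N + 1) → ℝ)) 0 = w ⬝ᵥ q t - δ := by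
    intro t
    simp [Matrix.mulVec, dotProduct, e₁, hVdef, transMatrix]
  refine forall_congr' fun t => ?_
  rw [h1 M, h1 C, hmax t]
  have hK : (congrT w K).mulVec (V.mulVec (q t) - δ • e₁)
      = W.mulVec (K.mulVec (q t)) - δ • (congrT w K).mulVec e₁ := by
    rw [Matrix.mulVec_sub, Matrix.mulVec_smul, h1 K]
  rw [hK]
  set k := kn * max (w ⬝ᵥ q t - δ) 0 with hk
  set X := (congrT w K).mulVec e₁ with hX
  have hL : W.mulVec (M.mulVec (q'' t)) + α • W.mulVec (C.mulVec (q' t))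
      + (W.mulVec (K.mulVec (q t)) - δ • X) + k • e₁
      = W.mulVec (M.mulVec (q'' t) + α • C.mulVec (q' t) + K.mulVec (q t) + k • w) - δ • X := by
    rw [← hwe]
    simp only [Matrix.mulVec_add, Matrix.mulVec_smul]
    module
  have hR : δ • ftilde w K + Real.cos (Ω * t) • fttilde w f
      = W.mulVec (Real.cos (Ω * t) • f) - δ • X := by
    rw [ftilde, fttilde, Matrix.mulVec_smul]
    simp only [← hX, ← hWdef, ← hVdef]
    module
  rw [hL, hR, sub_left_inj]
  exact Iff.symm ⟨fun h => hWinj h, fun h => congrArg W.mulVec h⟩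
end
end

section
/- Assume M is invertible and w₁ ≠ 0. A twice-differentiable curve q : ℝ → ℝ^N satisfies the equations of motion M q̈(t) + α C q̇(t) + K q(t) + k_n max(wᵀq(t) − δ, 0) w = f cos(Ω t) for all t if and only if the state curve x(t) := (V q(t) − δ e₁ ; V q̇(t)) ∈ ℝ^{2N} satisfies the first-order Lure-like system ẋ(t) = A(α) x(t) + max(e₁ᵀ x(t), 0) c + δ b + cos(Ω t) b_t for all t. -/
open Matrix

noncomputable section

/-- The Lure-like system matrix `A(α) = [[0, I],[−M̃⁻¹K̃, −α M̃⁻¹C̃]]`. -/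
def Amat {N : ℕ} (w : Fin (N + 1) → ℝ) (M C K : Matrix (Fin (N + 1)) (Fin (N + 1)) ℝ)
    (α : ℝ) : Matrix (Fin (N + 1) ⊕ Fin (N + 1)) (Fin (N + 1) ⊕ Fin (N + 1)) ℝ :=
  Matrix.fromBlocks 0 1 (-((congrT w M)⁻¹ * congrT w K)) (-(α • ((congrT w M)⁻¹ * congrT w C)))

/-- The vector `c = (0 ; −k_n M̃⁻¹ e₁)`. -/
def cvec {N : ℕ} (w : Fin (N + 1) → ℝ) (M : Matrix (Fin (N + 1)) (Fin (N + 1)) ℝ)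
    (kn : ℝ) : Fin (N + 1) ⊕ Fin (N + 1) → ℝ :=
  Sum.elim 0 (-(kn • ((congrT w M)⁻¹.mulVec e₁)))

/-- The vector `b = (0 ; M̃⁻¹ f̃)`. -/
def bvec {N : ℕ} (w : Fin (N + 1) → ℝ) (M K : Matrix (Fin (N + 1)) (Fin (N + 1)) ℝ) :
    Fin (N + 1) ⊕ Fin (N + 1) → ℝ :=
  Sum.elim 0 ((congrT w M)⁻¹.mulVec (ftilde w K))

/-- The vector `b_t = (0 ; M̃⁻¹ f̃_t)`. -/
def btvec {N : ℕ} (w : Fin (N + 1) → ℝ) (M : Matrix (Fin (N + 1)) (Fin (N + 1)) ℝ)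
    (f : Fin (N + 1) → ℝ) : Fin (N + 1) ⊕ Fin (N + 1) → ℝ :=
  Sum.elim 0 ((congrT w M)⁻¹.mulVec (fttilde w f))

/-! ### Auxiliary lemmas -/

lemma transMatrix_det {N : ℕ} (w : Fin (N + 1) → ℝ) : (transMatrix w).det = w 0 := by
  have h : (transMatrix w).BlockTriangular id := by
    intro i j hij
    have hij0 : (j : Fin (N + 1)) < i := hij
    have hi : ¬ i = 0 := by
      intro h; subst h; exact absurd hij0 (by simp)
    have hij' : ¬ i = j := fun h => absurd hij0 (by simp [h])
    simp [transMatrix, hi, hij']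
  rw [Matrix.det_of_upperTriangular h, Fin.prod_univ_succ]
  simp [transMatrix, Fin.succ_ne_zero]

lemma sum_elim_add {A B : Type*} (a c : A → ℝ) (b d : B → ℝ) :
    Sum.elim a b + Sum.elim c d = Sum.elim (a + c) (b + d) := by
  funext i; cases i <;> rfl

lemma sum_elim_smul {A B : Type*} (r : ℝ) (a : A → ℝ) (b : B → ℝ) :
    r • Sum.elim a b = Sum.elim (r • a) (r • b) := by
  funext i; cases i <;> rfl

lemma sum_elim_eq_iff {A B : Type*} {a c : A → ℝ} {b d : B → ℝ} :
    Sum.elim a b = Sum.elim c d ↔ a = c ∧ b = d := by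
  constructor
  · intro h
    exact ⟨funext fun x => congrFun h (Sum.inl x), funext fun x => congrFun h (Sum.inr x)⟩
  · rintro ⟨rfl, rfl⟩; rfl

/-- Assume `M` is invertible and `w₁ ≠ 0`.  A twice-differentiable curve `q` satisfies the
equations of motion `M q̈ + α C q̇ + K q + k_n max(wᵀq − δ, 0) w = f cos(Ω t)` if and only if the
state curve `x(t) := (V q(t) − δ e₁ ; V q̇(t)) ∈ ℝ^{2N}` satisfies the first-order Lure-like system
`ẋ = A(α) x + max(e₁ᵀ x, 0) c + δ b + cos(Ω t) b_t`. -/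
theorem eom_iff_lure_like {N : ℕ} (w : Fin (N + 1) → ℝ) (hw : w 0 ≠ 0)
    (M C K : Matrix (Fin (N + 1)) (Fin (N + 1)) ℝ) (hM : IsUnit M) (f : Fin (N + 1) → ℝ)
    (α kn δ Ω : ℝ) (q q' q'' : ℝ → Fin (N + 1) → ℝ)
    (hq' : ∀ t, HasDerivAt q (q' t) t) (hq'' : ∀ t, HasDerivAt q' (q'' t) t) :
    (∀ t : ℝ, M.mulVec (q'' t) + α • C.mulVec (q' t) + K.mulVec (q t)
        + (kn * max (w ⬝ᵥ q t - δ) 0) • w = Real.cos (Ω * t) • f)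
    ↔ (∀ t : ℝ,
        HasDerivAt
          (fun s : ℝ => Sum.elim
            ((transMatrix w).mulVec (q s) - δ • e₁) ((transMatrix w).mulVec (q' s)))
          ((Amat w M C K α).mulVec (Sum.elim
              ((transMatrix w).mulVec (q t) - δ • e₁) ((transMatrix w).mulVec (q' t)))
            + max (((transMatrix w).mulVec (q t) - δ • e₁ : Fin (N + 1) → ℝ) 0) 0 • cvec w M kn
            + δ • bvec w M K + Real.cos (Ω * t) • btvec w M f) t) := by
  set Vm := transMatrix w with hVmdef
  -- basic invertibility facts
  have hdet : IsUnit Vm.det := by rw [hVmdef, transMatrix_det]; exact hw.isUnit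
  have hViVm : Vm⁻¹ * Vm = 1 := nonsing_inv_mul _ hdet
  have hVmVi : Vm * Vm⁻¹ = 1 := mul_nonsing_inv _ hdet
  have hMdet : IsUnit M.det := (Matrix.isUnit_iff_isUnit_det M).mp hM
  have hMtdet : IsUnit (congrT w M).det := by
    rw [congrT, Matrix.det_mul, Matrix.det_mul, Matrix.det_transpose, Matrix.det_nonsing_inv]
    rw [← hVmdef]
    exact ((isUnit_ringInverse.mpr hdet).mul hMdet).mul (isUnit_ringInverse.mpr hdet)
  -- matrix identities
  have hG' : (congrT w M)⁻¹ * ((Vm⁻¹)ᵀ) = Vm * M⁻¹ := by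
    have h1 : congrT w M * (Vm * M⁻¹) = (Vm⁻¹)ᵀ := by
      rw [congrT, ← hVmdef, Matrix.mul_assoc ((Vm⁻¹)ᵀ * M) (Vm⁻¹) (Vm * M⁻¹),
        ← Matrix.mul_assoc (Vm⁻¹) Vm (M⁻¹), hViVm, Matrix.one_mul,
        Matrix.mul_assoc ((Vm⁻¹)ᵀ) M (M⁻¹), mul_nonsing_inv _ hMdet, Matrix.mul_one]
    rw [← h1, ← Matrix.mul_assoc, nonsing_inv_mul _ hMtdet, Matrix.one_mul]
  have hKVm : ∀ (X : Matrix (Fin (N + 1)) (Fin (N + 1)) ℝ),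
      (congrT w M)⁻¹ * congrT w X * Vm = Vm * (M⁻¹ * X) := by
    intro X
    have h2 : congrT w X * Vm = (Vm⁻¹)ᵀ * X := by
      rw [congrT, ← hVmdef, Matrix.mul_assoc, hViVm, Matrix.mul_one]
    rw [Matrix.mul_assoc, h2, ← Matrix.mul_assoc, hG', Matrix.mul_assoc]
  have hVt : Vmᵀ *ᵥ (e₁ : Fin (N + 1) → ℝ) = w := by
    funext j
    simp [hVmdef, Matrix.mulVec, dotProduct, e₁, transMatrix, Pi.single_apply]
  have hPw : ((Vm⁻¹)ᵀ) *ᵥ w = (e₁ : Fin (N + 1) → ℝ) := by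
    rw [← hVt, mulVec_mulVec, ← Matrix.transpose_mul, hVmVi, Matrix.transpose_one, one_mulVec]
  have hGw : (congrT w M)⁻¹ *ᵥ (e₁ : Fin (N + 1) → ℝ) = (Vm * M⁻¹) *ᵥ w := by
    rw [← hPw, mulVec_mulVec, hG']
  -- injectivity of Vm
  have hinj : ∀ a b : Fin (N + 1) → ℝ, Vm *ᵥ a = Vm *ᵥ b ↔ a = b := by
    intro a b
    constructor
    · intro h
      have := congrArg (fun v => Vm⁻¹ *ᵥ v) h
      simpa [mulVec_mulVec, hViVm, one_mulVec] using this
    · intro h; rw [h]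
  -- derivative of the state curve
  have hstate : ∀ t, HasDerivAt
      (fun s : ℝ => Sum.elim (Vm *ᵥ (q s) - δ • e₁) (Vm *ᵥ (q' s)))
      (Sum.elim (Vm *ᵥ (q' t)) (Vm *ᵥ (q'' t))) t := by
    intro t
    have hco : ∀ (u u' : ℝ → Fin (N + 1) → ℝ), (∀ s, HasDerivAt u (u' s) s) →
        ∀ j : Fin (N + 1), HasDerivAt (fun s => (Vm *ᵥ (u s)) j) ((Vm *ᵥ (u' t)) j) t := by
      intro u u' hu j
      simp only [Matrix.mulVec, dotProduct]
      exact HasDerivAt.fun_sum fun k _ => ((hasDerivAt_pi.1 (hu t)) k).const_mul _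
    rw [hasDerivAt_pi]
    intro i
    cases i with
    | inl j =>
      simp only [Sum.elim_inl, Pi.sub_apply]
      exact (hco q q' hq' j).sub_const _
    | inr j =>
      simp only [Sum.elim_inr]
      exact hco q' q'' hq'' j
  refine forall_congr' fun t => ?_
  have huniq : ∀ D, HasDerivAt
      (fun s : ℝ => Sum.elim (Vm *ᵥ (q s) - δ • e₁) (Vm *ᵥ (q' s))) D t ↔
      D = Sum.elim (Vm *ᵥ (q' t)) (Vm *ᵥ (q'' t)) :=
    fun D => ⟨fun h => h.unique (hstate t), fun h => h ▸ hstate t⟩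
  rw [huniq]
  -- compute the first component of the state
  have hx0 : ((Vm *ᵥ (q t) - δ • e₁ : Fin (N + 1) → ℝ)) 0 = w ⬝ᵥ q t - δ := by
    simp [hVmdef, Matrix.mulVec, dotProduct, e₁, transMatrix, Pi.single_apply]
  rw [hx0]
  set m := max (w ⬝ᵥ q t - δ) 0 with hm
  -- reduce the block structure
  simp only [Amat, cvec, bvec, btvec, ftilde, fttilde, Matrix.fromBlocks_mulVec,
    Sum.elim_comp_inl, Sum.elim_comp_inr, sum_elim_smul, sum_elim_add, smul_zero,
    zero_mulVec, one_mulVec, zero_add, add_zero]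
  rw [sum_elim_eq_iff]
  have htriv : Vm *ᵥ (q' t) = Vm *ᵥ (q' t) := rfl
  simp only [htriv, true_and]
  -- the remaining algebraic identity
  set R : Fin (N + 1) → ℝ :=
    Real.cos (Ω * t) • f - α • (C *ᵥ q' t) - K *ᵥ q t - (kn * m) • w with hR
  have hLHS : (-((congrT w M)⁻¹ * congrT w K)) *ᵥ (Vm *ᵥ q t - δ • e₁)
      + (-(α • ((congrT w M)⁻¹ * congrT w C))) *ᵥ (Vm *ᵥ q' t)
      + m • (-(kn • ((congrT w M)⁻¹ *ᵥ e₁)))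
      + δ • ((congrT w M)⁻¹ *ᵥ (-(congrT w K *ᵥ e₁)))
      + Real.cos (Ω * t) • ((congrT w M)⁻¹ *ᵥ (((Vm⁻¹)ᵀ) *ᵥ f))
      = Vm *ᵥ (M⁻¹ *ᵥ R) := by
    simp only [hR, Matrix.neg_mul, Matrix.smul_mul, neg_mulVec, mulVec_sub, mulVec_smul,
      smul_mulVec, Matrix.mulVec_neg, mulVec_mulVec]
    rw [hKVm K, hKVm C, hG', hGw]
    module
  rw [hLHS]
  rw [hinj]
  constructor
  · intro h
    have h1 : M *ᵥ q'' t = R := by rw [hR, ← h]; abel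
    rw [← h1, mulVec_mulVec, nonsing_inv_mul _ hMdet, one_mulVec]
  · intro h
    have h2 : M *ᵥ q'' t = R := by
      rw [← h, mulVec_mulVec, mul_nonsing_inv _ hMdet, one_mulVec]
    rw [hR] at h2
    rw [h2]; abel
end
end

section
/- Saad's block-exponential identity: for every real n×n matrix B and every c ∈ ℝⁿ (viewed as an n×1 column), the exponential of the (n+1)×(n+1) block matrix [[B, c],[0, 0]] equals the block matrix [[exp(B), φ₁(B)c],[0, 1]]. -/
open Matrix

noncomputable section

/-- The phi-function `φ₁(B) := ∑_{k=0}^∞ B^k/(k+1)!` of a real square matrix `B`. -/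
def phi1 {n : ℕ} (B : Matrix (Fin n) (Fin n) ℝ) : Matrix (Fin n) (Fin n) ℝ :=
  ∑' k : ℕ, ((k + 1).factorial : ℝ)⁻¹ • B ^ k

/-- Saad's block-exponential identity: for every real `n×n` matrix `B` and every `c ∈ ℝⁿ`
(viewed as an `n×1` column), `exp [[B, c],[0, 0]] = [[exp(B), φ₁(B)c],[0, 1]]`. -/
theorem saad_block_exponential {n : ℕ} (B : Matrix (Fin n) (Fin n) ℝ) (c : Fin n → ℝ) :
    NormedSpace.exp (Matrix.fromBlocks B (Matrix.replicateCol (Fin 1) c) 0 0)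
      = Matrix.fromBlocks (NormedSpace.exp B) (Matrix.replicateCol (Fin 1) ((phi1 B).mulVec c)) 0 (1 : Matrix (Fin 1) (Fin 1) ℝ) := by
  letI : NormedRing (Matrix (Fin n) (Fin n) ℝ) := Matrix.linftyOpNormedRing
  letI : NormedAlgebra ℝ (Matrix (Fin n) (Fin n) ℝ) := Matrix.linftyOpNormedAlgebra
  letI : NormedRing (Matrix (Fin n ⊕ Fin 1) (Fin n ⊕ Fin 1) ℝ) := Matrix.linftyOpNormedRing
  letI : NormedAlgebra ℝ (Matrix (Fin n ⊕ Fin 1) (Fin n ⊕ Fin 1) ℝ) := Matrix.linftyOpNormedAlgebra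
  set M := Matrix.fromBlocks B (Matrix.replicateCol (Fin 1) c) 0 0 with hM
  -- summability of the phi-series
  have hsum : Summable (fun k : ℕ => ((k + 1).factorial : ℝ)⁻¹ • B ^ k) := by
    refine Summable.of_norm_bounded (NormedSpace.norm_expSeries_summable' (𝕂 := ℝ) B) ?_
    intro k
    rw [norm_smul, norm_smul]
    gcongr
    rw [Real.norm_eq_abs, Real.norm_eq_abs, abs_of_nonneg (by positivity),
      abs_of_nonneg (by positivity)]
    apply inv_anti₀ (by positivity)
    exact_mod_cast Nat.factorial_le (Nat.le_succ k)
  have hphi : HasSum (fun k : ℕ => ((k + 1).factorial : ℝ)⁻¹ • B ^ k) (phi1 B) := by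
    rw [phi1]; exact hsum.hasSum
  have hE : HasSum (fun k : ℕ => ((k).factorial : ℝ)⁻¹ • B ^ k) (NormedSpace.exp B) :=
    NormedSpace.exp_series_hasSum_exp' B
  -- exp B = B * phi1 B + 1
  have hmul : HasSum (fun k : ℕ => (((k + 1)).factorial : ℝ)⁻¹ • B ^ (k + 1)) (B * phi1 B) := by
    have h := hphi.mul_left B
    convert h using 2 with k
    case e'_3 => rfl
    rw [mul_smul_comm, pow_succ']
  have hEB : NormedSpace.exp B = B * phi1 B + 1 := by
    refine hE.unique ?_
    have h := (hasSum_nat_add_iff (f := fun k : ℕ => ((k).factorial : ℝ)⁻¹ • B ^ k) 1).mp hmul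
    simpa using h
  -- powers of M
  have hpow : ∀ k : ℕ, M ^ (k + 1)
      = Matrix.fromBlocks (B ^ (k + 1)) (Matrix.replicateCol (Fin 1) ((B ^ k).mulVec c)) 0 0 := by
    intro k
    induction k with
    | zero => simp [hM]
    | succ k ih =>
      rw [pow_succ, ih, hM, Matrix.fromBlocks_multiply]
      simp [← Matrix.replicateCol_mulVec, ← pow_succ]
  -- the linear map assembling the blocks
  let F : Matrix (Fin n) (Fin n) ℝ →ₗ[ℝ] Matrix (Fin n ⊕ Fin 1) (Fin n ⊕ Fin 1) ℝ :=
    { toFun := fun X => Matrix.fromBlocks (B * X) (Matrix.replicateCol (Fin 1) (X.mulVec c)) 0 0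
      map_add' := by
        intro X Y
        ext (i | i) (j | j) <;>
          simp [Matrix.mul_add, Matrix.add_mulVec]
      map_smul' := by
        intro r X
        ext (i | i) (j | j) <;>
          simp [Matrix.mul_smul, Matrix.smul_mulVec] }
  have hF := hphi.mapL (LinearMap.toContinuousLinearMap F)
  have h1 : HasSum (fun k : ℕ => (((k + 1)).factorial : ℝ)⁻¹ • M ^ (k + 1))
      (Matrix.fromBlocks (B * phi1 B) (Matrix.replicateCol (Fin 1) ((phi1 B).mulVec c)) 0 0) := by
    have hfun : (fun k : ℕ => (((k + 1)).factorial : ℝ)⁻¹ • M ^ (k + 1))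
        = fun k : ℕ => (LinearMap.toContinuousLinearMap F) (((k + 1).factorial : ℝ)⁻¹ • B ^ k) := by
      funext k
      rw [hpow k, LinearMap.coe_toContinuousLinearMap', _root_.map_smul]
      congr 1
      show _ = Matrix.fromBlocks (B * B ^ k) (Matrix.replicateCol (Fin 1) ((B ^ k).mulVec c)) 0 0
      rw [← pow_succ']
    have hval : (LinearMap.toContinuousLinearMap F) (phi1 B)
        = Matrix.fromBlocks (B * phi1 B) (Matrix.replicateCol (Fin 1) ((phi1 B).mulVec c)) 0 0 := rfl
    rw [hfun, ← hval]
    exact hF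
  have h2 := (hasSum_nat_add_iff (f := fun k : ℕ => ((k).factorial : ℝ)⁻¹ • M ^ k) 1).mp h1
  have h3 : HasSum (fun k : ℕ => ((k).factorial : ℝ)⁻¹ • M ^ k)
      (Matrix.fromBlocks (NormedSpace.exp B)
        (Matrix.replicateCol (Fin 1) ((phi1 B).mulVec c)) 0 (1 : Matrix (Fin 1) (Fin 1) ℝ)) := by
    convert h2 using 1
    case e'_3 => rfl
    rw [hEB]
    simp only [Finset.range_one, Finset.sum_singleton, Nat.factorial_zero, Nat.cast_one, inv_one,
      pow_zero, one_smul]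
    rw [← Matrix.fromBlocks_one, Matrix.fromBlocks_add]
    simp
  exact (NormedSpace.exp_series_hasSum_exp' M).unique h3
end
end

section
/- An invariant cone with μ = 1 yields a periodic orbit (nonlinear normal mode) of the homogeneous continuous piecewise linear system: let A⁻ ∈ ℝ^{n×n}, c ∈ ℝⁿ, A⁺ = A⁻ + c e₁ᵀ, and suppose ξ ∈ ℝⁿ and t⁻, t⁺ > 0 satisfy: e₁ᵀξ = 0; e₁ᵀ exp(sA⁻) ξ ≤ 0 for all s ∈ [0, t⁻]; setting η := exp(t⁻A⁻) ξ, e₁ᵀη = 0 and e₁ᵀ exp(sA⁺) η ≥ 0 for all s ∈ [0, t⁺]; and exp(t⁺A⁺) exp(t⁻A⁻) ξ = ξ. Then, with T := t⁻ + t⁺, there exists a T-periodic curve x : ℝ → ℝⁿ with x(0) = ξ that satisfies ẋ(t) = A⁻ x(t) + max(e₁ᵀ x(t), 0) c for all t ∈ ℝ. -/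
open Matrix

section Aux
open NormedSpace

/-- The flow `s ↦ exp(sA) v`. -/
noncomputable def icFlow {N : ℕ} (A : Matrix (Fin N) (Fin N) ℝ) (v : Fin N → ℝ) (s : ℝ) :
    Fin N → ℝ := (exp (s • A)).mulVec v

lemma icFlow_zero {N : ℕ} (A : Matrix (Fin N) (Fin N) ℝ) (v : Fin N → ℝ) :
    icFlow A v 0 = v := by simp [icFlow, exp_zero]

lemma icFlow_hasDerivAt {N : ℕ} (A : Matrix (Fin N) (Fin N) ℝ) (v : Fin N → ℝ) (t : ℝ) :
    HasDerivAt (icFlow A v) (A.mulVec (icFlow A v t)) t := by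
  letI : SeminormedRing (Matrix (Fin N) (Fin N) ℝ) := Matrix.linftyOpSemiNormedRing
  letI : NormedRing (Matrix (Fin N) (Fin N) ℝ) := Matrix.linftyOpNormedRing
  letI : NormedAlgebra ℝ (Matrix (Fin N) (Fin N) ℝ) := Matrix.linftyOpNormedAlgebra
  have h := hasDerivAt_exp_smul_const' (𝕂 := ℝ) A t
  let L : Matrix (Fin N) (Fin N) ℝ →ₗ[ℝ] (Fin N → ℝ) :=
    { toFun := fun M => M.mulVec v
      map_add' := fun M M' => Matrix.add_mulVec M M' v
      map_smul' := fun r M => Matrix.smul_mulVec r M v }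
  have hc := (LinearMap.toContinuousLinearMap L).hasFDerivAt
    (x := exp (t • A)) |>.comp_hasDerivAt t h
  have hc' : HasDerivAt (icFlow A v) ((LinearMap.toContinuousLinearMap L) (A * exp (t • A))) t := hc
  rw [show A.mulVec (icFlow A v t) = (LinearMap.toContinuousLinearMap L) (A * exp (t • A)) from
    Matrix.mulVec_mulVec _ _ _]
  exact hc'

lemma icFlow_shift_hasDerivAt {N : ℕ} (A : Matrix (Fin N) (Fin N) ℝ) (v : Fin N → ℝ)
    (a t : ℝ) :
    HasDerivAt (fun s => icFlow A v (s - a)) (A.mulVec (icFlow A v (t - a))) t := by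
  have h := HasDerivAt.scomp (𝕜 := ℝ) t (icFlow_hasDerivAt A v (t - a))
    ((hasDerivAt_id t).sub_const a)
  simpa [Function.comp_def] using h

lemma ic_vecMulVec_mulVec {N : ℕ} (c v : Fin (N + 1) → ℝ) :
    (Matrix.vecMulVec c (Pi.single 0 1)).mulVec v = v 0 • c := by
  funext i
  simp [Matrix.mulVec, Matrix.vecMulVec_apply, dotProduct, mul_assoc, ← Finset.mul_sum,
    Pi.single_apply, mul_comm]

end Aux

/-- An invariant cone with `μ = 1` yields a periodic orbit (nonlinear normal mode) of the
homogeneous continuous piecewise linear system `ẋ = A⁻x + max(x₁, 0) c` with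
`A⁺ = A⁻ + c e₁ᵀ`: if `ξ` lies on the switching hyperplane, the `⊖`-flow from `ξ` stays in
`{x₁ ≤ 0}` up to time `t⁻` where it reaches `η := exp(t⁻A⁻) ξ` on the hyperplane, the `⊕`-flow
from `η` stays in `{x₁ ≥ 0}` up to time `t⁺`, and `exp(t⁺A⁺) exp(t⁻A⁻) ξ = ξ`, then there is a
`T := t⁻ + t⁺`-periodic solution `x` of the piecewise linear system with `x(0) = ξ`. -/
theorem invariant_cone_yields_periodic_orbit {n : ℕ}
    (Am : Matrix (Fin (n + 1)) (Fin (n + 1)) ℝ) (c ξ : Fin (n + 1) → ℝ) (tm tp : ℝ)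
    (htm : 0 < tm) (htp : 0 < tp)
    (hξ0 : ξ 0 = 0)
    (hminus : ∀ s ∈ Set.Icc (0 : ℝ) tm, ((NormedSpace.exp (s • Am)).mulVec ξ) 0 ≤ 0)
    (hη0 : ((NormedSpace.exp (tm • Am)).mulVec ξ) 0 = 0)
    (hplus : ∀ s ∈ Set.Icc (0 : ℝ) tp,
      ((NormedSpace.exp (s • (Am + Matrix.vecMulVec c (Pi.single 0 1)))).mulVec
        ((NormedSpace.exp (tm • Am)).mulVec ξ)) 0 ≥ 0)
    (hret : (NormedSpace.exp (tp • (Am + Matrix.vecMulVec c (Pi.single 0 1)))).mulVec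
        ((NormedSpace.exp (tm • Am)).mulVec ξ) = ξ) :
    ∃ x : ℝ → Fin (n + 1) → ℝ,
      x 0 = ξ
      ∧ (∀ t : ℝ, x (t + (tm + tp)) = x t)
      ∧ (∀ t : ℝ, HasDerivAt x (Am.mulVec (x t) + max (x t 0) 0 • c) t) := by
  set T : ℝ := tm + tp with hTdef
  have hT0 : 0 < T := by positivity
  set Ap : Matrix (Fin (n + 1)) (Fin (n + 1)) ℝ :=
    Am + Matrix.vecMulVec c (Pi.single 0 1) with hApdef
  set η : Fin (n + 1) → ℝ := (NormedSpace.exp (tm • Am)).mulVec ξ with hηdef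
  have hApv : ∀ v : Fin (n + 1) → ℝ, Ap.mulVec v = Am.mulVec v + v 0 • c := by
    intro v
    rw [hApdef, Matrix.add_mulVec, ic_vecMulVec_mulVec]
  have hφm_tm : icFlow Am ξ tm = η := rfl
  have hφp_0 : icFlow Ap η 0 = η := icFlow_zero _ _
  have hφp_tp : icFlow Ap η tp = ξ := hret
  have hφm_le : ∀ s ∈ Set.Icc (0 : ℝ) tm, icFlow Am ξ s 0 ≤ 0 := hminus
  have hφp_ge : ∀ s ∈ Set.Icc (0 : ℝ) tp, 0 ≤ icFlow Ap η s 0 := hplus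
  -- the candidate solution
  set x : ℝ → Fin (n + 1) → ℝ := fun t =>
    if t - ⌊t / T⌋ * T ≤ tm then icFlow Am ξ (t - ⌊t / T⌋ * T)
    else icFlow Ap η (t - ⌊t / T⌋ * T - tm) with hxdef
  have hfloor : ∀ (k : ℤ) (s : ℝ), (k : ℝ) * T ≤ s → s < ((k : ℝ) + 1) * T → ⌊s / T⌋ = k := by
    intro k s h1 h2
    rw [Int.floor_eq_iff]
    constructor
    · rw [le_div_iff₀ hT0]; exact h1
    · rw [div_lt_iff₀ hT0]; push_cast; linarith
  have hxm : ∀ (k : ℤ) (s : ℝ), (k : ℝ) * T ≤ s → s ≤ (k : ℝ) * T + tm →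
      x s = icFlow Am ξ (s - (k : ℝ) * T) := by
    intro k s h1 h2
    have hf : ⌊s / T⌋ = k := hfloor k s h1 (by linarith)
    rw [hxdef]
    simp only [hf]
    rw [if_pos (by linarith)]
  have hxp : ∀ (k : ℤ) (s : ℝ), (k : ℝ) * T + tm ≤ s → s < ((k : ℝ) + 1) * T →
      x s = icFlow Ap η (s - ((k : ℝ) * T + tm)) := by
    intro k s h1 h2
    have hf : ⌊s / T⌋ = k := hfloor k s (by linarith) h2
    rw [hxdef]
    simp only [hf]
    by_cases h : s - (k : ℝ) * T ≤ tm
    · have hs : s = (k : ℝ) * T + tm := by linarith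
      rw [if_pos h, hs]
      simp only [add_sub_cancel_left, sub_self]
      rw [hφm_tm, hφp_0]
    · rw [if_neg h, sub_sub]
  refine ⟨x, ?_, ?_, ?_⟩
  · have h0 : ⌊(0 : ℝ) / T⌋ = 0 := by simp
    rw [hxdef]
    simp only [h0]
    norm_num
    rw [if_pos htm.le, icFlow_zero]
  · intro t
    have hfl : ⌊(t + T) / T⌋ = ⌊t / T⌋ + 1 := by
      rw [show (t + T) / T = t / T + 1 by field_simp, Int.floor_add_one]
    rw [hxdef]
    simp only [hfl]
    have harg : t + T - (↑(⌊t / T⌋ + 1)) * T = t - ⌊t / T⌋ * T := by push_cast; ring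
    rw [harg]
  · intro t
    set k : ℤ := ⌊t / T⌋ with hkdef
    have hk1 : (k : ℝ) * T ≤ t := by
      have := Int.floor_le (t / T)
      rwa [le_div_iff₀ hT0] at this
    have hk2 : t < ((k : ℝ) + 1) * T := by
      have := Int.lt_floor_add_one (t / T)
      rw [div_lt_iff₀ hT0] at this
      rw [hkdef]
      exact this
    have hR : HasDerivWithinAt x (Am.mulVec (x t) + max (x t 0) 0 • c) (Set.Ici t) t := by
      by_cases hcase : t < (k : ℝ) * T + tm
      · -- minus piece on the right
        have hxt : x t = icFlow Am ξ (t - (k : ℝ) * T) := hxm k t hk1 hcase.le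
        have hd := (icFlow_shift_hasDerivAt Am ξ ((k : ℝ) * T) t).hasDerivWithinAt
          (s := Set.Ici t)
        have heq : x =ᶠ[nhdsWithin t (Set.Ici t)] fun s => icFlow Am ξ (s - (k : ℝ) * T) := by
          have hmem : Set.Iio ((k : ℝ) * T + tm) ∈ nhdsWithin t (Set.Ici t) :=
            nhdsWithin_le_nhds (Iio_mem_nhds hcase)
          filter_upwards [hmem, self_mem_nhdsWithin] with s hs1 hs2
          exact hxm k s (le_trans hk1 hs2) hs1.le
        have hx0 : x t 0 ≤ 0 := by
          rw [hxt]
          exact hφm_le _ ⟨by linarith, by linarith⟩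
        have := hd.congr_of_eventuallyEq heq hxt
        rw [max_eq_right hx0, zero_smul, add_zero, hxt]
        exact this
      · -- plus piece on the right
        push_neg at hcase
        have hxt : x t = icFlow Ap η (t - ((k : ℝ) * T + tm)) := hxp k t hcase hk2
        have hd := (icFlow_shift_hasDerivAt Ap η ((k : ℝ) * T + tm) t).hasDerivWithinAt
          (s := Set.Ici t)
        have heq : x =ᶠ[nhdsWithin t (Set.Ici t)]
            fun s => icFlow Ap η (s - ((k : ℝ) * T + tm)) := by
          have hmem : Set.Iio (((k : ℝ) + 1) * T) ∈ nhdsWithin t (Set.Ici t) :=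
            nhdsWithin_le_nhds (Iio_mem_nhds hk2)
          filter_upwards [hmem, self_mem_nhdsWithin] with s hs1 hs2
          exact hxp k s (le_trans hcase hs2) hs1
        have hx0 : 0 ≤ x t 0 := by
          rw [hxt]
          exact hφp_ge _ ⟨by linarith, by simp only [hTdef] at hk2 ⊢; linarith⟩
        have := hd.congr_of_eventuallyEq heq hxt
        rw [max_eq_left hx0, ← hApv]
        rwa [hxt]
    have hL : HasDerivWithinAt x (Am.mulVec (x t) + max (x t 0) 0 • c) (Set.Iic t) t := by
      by_cases hc1 : (k : ℝ) * T + tm < t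
      · -- plus piece on the left
        have hxt : x t = icFlow Ap η (t - ((k : ℝ) * T + tm)) := hxp k t hc1.le hk2
        have hd := (icFlow_shift_hasDerivAt Ap η ((k : ℝ) * T + tm) t).hasDerivWithinAt
          (s := Set.Iic t)
        have heq : x =ᶠ[nhdsWithin t (Set.Iic t)]
            fun s => icFlow Ap η (s - ((k : ℝ) * T + tm)) := by
          have hmem : Set.Ioi ((k : ℝ) * T + tm) ∈ nhdsWithin t (Set.Iic t) :=
            nhdsWithin_le_nhds (Ioi_mem_nhds hc1)
          filter_upwards [hmem, self_mem_nhdsWithin] with s hs1 hs2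
          exact hxp k s hs1.le (lt_of_le_of_lt hs2 hk2)
        have hx0 : 0 ≤ x t 0 := by
          rw [hxt]
          exact hφp_ge _ ⟨by linarith, by simp only [hTdef] at hk2 ⊢; linarith⟩
        have := hd.congr_of_eventuallyEq heq hxt
        rw [max_eq_left hx0, ← hApv]
        rwa [hxt]
      · push_neg at hc1
        by_cases hc2 : (k : ℝ) * T < t
        · -- minus piece on the left
          have hxt : x t = icFlow Am ξ (t - (k : ℝ) * T) := hxm k t hk1 hc1
          have hd := (icFlow_shift_hasDerivAt Am ξ ((k : ℝ) * T) t).hasDerivWithinAt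
            (s := Set.Iic t)
          have heq : x =ᶠ[nhdsWithin t (Set.Iic t)]
              fun s => icFlow Am ξ (s - (k : ℝ) * T) := by
            have hmem : Set.Ioi ((k : ℝ) * T) ∈ nhdsWithin t (Set.Iic t) :=
              nhdsWithin_le_nhds (Ioi_mem_nhds hc2)
            filter_upwards [hmem, self_mem_nhdsWithin] with s hs1 hs2
            exact hxm k s hs1.le (le_trans hs2 hc1)
          have hx0 : x t 0 ≤ 0 := by
            rw [hxt]
            exact hφm_le _ ⟨by linarith, by linarith⟩
          have := hd.congr_of_eventuallyEq heq hxt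
          rw [max_eq_right hx0, zero_smul, add_zero, hxt]
          exact this
        · -- t = k*T : plus piece from previous period on the left
          push_neg at hc2
          have ht : t = (k : ℝ) * T := le_antisymm hc2 hk1
          have hxt : x t = ξ := by
            rw [hxm k t hk1 (by linarith), ht]
            simp [icFlow_zero]
          have htp' : t - (((k : ℝ) - 1) * T + tm) = tp := by
            rw [ht, hTdef]; ring
          have hd := (icFlow_shift_hasDerivAt Ap η (((k : ℝ) - 1) * T + tm) t).hasDerivWithinAt
            (s := Set.Iic t)
          rw [htp', hφp_tp] at hd
          have heq : x =ᶠ[nhdsWithin t (Set.Iic t)]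
              fun s => icFlow Ap η (s - (((k : ℝ) - 1) * T + tm)) := by
            have hlt : ((k : ℝ) - 1) * T + tm < t := by rw [ht, hTdef]; nlinarith
            have hmem : Set.Ioi (((k : ℝ) - 1) * T + tm) ∈ nhdsWithin t (Set.Iic t) :=
              nhdsWithin_le_nhds (Ioi_mem_nhds hlt)
            filter_upwards [hmem, self_mem_nhdsWithin] with s hs1 hs2
            rcases eq_or_lt_of_le (Set.mem_Iic.mp hs2) with hs2 | hs2
            · rw [hs2, hxt, show t - (((k : ℝ) - 1) * T + tm) = tp by rw [ht, hTdef]; ring,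
                hφp_tp]
            · have hs1' : ((k : ℝ) - 1) * T + tm < s := Set.mem_Ioi.mp hs1
              have hs2' : s < (k : ℝ) * T := ht ▸ hs2
              have := hxp (k - 1) s (by push_cast; linarith) (by push_cast; linarith)
              rw [this]
              congr 2
              push_cast
              ring
          have hcongr := hd.congr_of_eventuallyEq heq (by
            rw [hxt, show t - (((k : ℝ) - 1) * T + tm) = tp by rw [ht, hTdef]; ring, hφp_tp])
          rw [hxt, hξ0]
          have : Ap.mulVec ξ = Am.mulVec ξ := by rw [hApv, hξ0]; simp
          rw [← this]
          simpa using hcongr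
    have hunion := hL.union hR
    rw [Set.Iic_union_Ici] at hunion
    exact hasDerivWithinAt_univ.mp hunion
end
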